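/- Let M be an ℝ-tree, let s ∈ [0,1], and for x₁, x₂ ∈ M let ν_s(x₁,x₂) denote the unique point of the segment [x₁,x₂] at distance s·d(x₁,x₂) from x₁ and distance (1−s)·d(x₁,x₂) from x₂. Then for all x₁, x₂, y ∈ M: d(ν_s(x₁,x₂), y) = max{ d(x₁,y) − s·d(x₁,x₂), d(x₂,y) − (1−s)·d(x₁,x₂), 0 } (that is, the maximum of the two truncated subtractions). -/

import Mathlib

open Set Metric

/-- A geodesic segment in a metric space: the image of an isometric embedding of a
closed real interval `[0, ℓ]`, going from `a` to `b`. -/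
def IsGeodesicSegmentFromTo {M : Type*} [MetricSpace M] (s : Set M) (a b : M) : Prop :=
  ∃ ℓ : ℝ, 0 ≤ ℓ ∧ ∃ γ : ℝ → M,
    (∀ u ∈ Set.Icc (0:ℝ) ℓ, ∀ v ∈ Set.Icc (0:ℝ) ℓ, dist (γ u) (γ v) = |u - v|) ∧
    γ 0 = a ∧ γ ℓ = b ∧ s = γ '' Set.Icc 0 ℓ

/-- An arc from `a` to `b`: the (injective, continuous) image of a closed real
interval `[0, ℓ]`; a single point when `a = b`. -/
def IsArcFromTo {M : Type*} [MetricSpace M] (s : Set M) (a b : M) : Prop :=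
  ∃ ℓ : ℝ, 0 ≤ ℓ ∧ ∃ γ : ℝ → M,
    ContinuousOn γ (Set.Icc 0 ℓ) ∧ Set.InjOn γ (Set.Icc 0 ℓ) ∧
    γ 0 = a ∧ γ ℓ = b ∧ s = γ '' Set.Icc 0 ℓ

/-- An ℝ-tree: a metric space in which any two points are joined by a unique arc,
and that arc is a geodesic segment. -/
def IsRTree (M : Type*) [MetricSpace M] : Prop :=
  ∀ a b : M, ∃ s : Set M,
    IsArcFromTo s a b ∧ IsGeodesicSegmentFromTo s a b ∧
    ∀ t : Set M, IsArcFromTo t a b → t = s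

/-- The geodesic segment `[a, b]` in an ℝ-tree: the unique arc from `a` to `b`. -/
noncomputable def seg {M : Type*} [MetricSpace M] (h : IsRTree M) (a b : M) : Set M :=
  (h a b).choose

section Helpers
variable {M : Type*} [MetricSpace M]

private lemma iso_contOn {γ : ℝ → M} {ℓ : ℝ}
    (hiso : ∀ u ∈ Set.Icc (0:ℝ) ℓ, ∀ v ∈ Set.Icc (0:ℝ) ℓ, dist (γ u) (γ v) = |u - v|) :
    ContinuousOn γ (Set.Icc 0 ℓ) := by
  refine (LipschitzOnWith.of_dist_le_mul (K := 1) ?_).continuousOn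
  intro u hu v hv
  rw [hiso u hu v hv, Real.dist_eq]
  simp

private lemma iso_injOn {γ : ℝ → M} {ℓ : ℝ}
    (hiso : ∀ u ∈ Set.Icc (0:ℝ) ℓ, ∀ v ∈ Set.Icc (0:ℝ) ℓ, dist (γ u) (γ v) = |u - v|) :
    Set.InjOn γ (Set.Icc 0 ℓ) := by
  intro u hu v hv huv
  have h := hiso u hu v hv
  rw [huv, dist_self] at h
  have := abs_eq_zero.mp h.symm
  linarith [sub_eq_zero.mp this]

private lemma isArcFromTo_of_iso {γ : ℝ → M} {ℓ : ℝ} (hℓ : 0 ≤ ℓ)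
    (hiso : ∀ u ∈ Set.Icc (0:ℝ) ℓ, ∀ v ∈ Set.Icc (0:ℝ) ℓ, dist (γ u) (γ v) = |u - v|) :
    IsArcFromTo (γ '' Set.Icc 0 ℓ) (γ 0) (γ ℓ) :=
  ⟨ℓ, hℓ, γ, iso_contOn hiso, iso_injOn hiso, rfl, rfl, rfl⟩

private lemma contOn_union_closed {α β : Type*} [TopologicalSpace α] [TopologicalSpace β]
    {f : α → β} {s t : Set α} (hs : IsClosed s) (ht : IsClosed t)
    (hfs : ContinuousOn f s) (hft : ContinuousOn f t) : ContinuousOn f (s ∪ t) := by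
  intro x hx
  apply ContinuousWithinAt.union
  · by_cases hxs : x ∈ s
    · exact hfs x hxs
    · exact continuousWithinAt_of_notMem_closure (by rwa [hs.closure_eq])
  · by_cases hxt : x ∈ t
    · exact hft x hxt
    · exact continuousWithinAt_of_notMem_closure (by rwa [ht.closure_eq])

private lemma arc_concat {A B : Set M} {a p y : M}
    (hA : IsArcFromTo A a p) (hB : IsArcFromTo B p y)
    (hAB : ∀ q, q ∈ A → q ∈ B → q = p) : IsArcFromTo (A ∪ B) a y := by
  obtain ⟨ℓ₁, hℓ₁, γ₁, hc₁, hi₁, h₁0, h₁e, hA'⟩ := hA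
  obtain ⟨ℓ₂, hℓ₂, γ₂, hc₂, hi₂, h₂0, h₂e, hB'⟩ := hB
  set φ : ℝ → M := fun t => if t ≤ ℓ₁ then γ₁ t else γ₂ (t - ℓ₁) with hφ
  have hagree₁ : ∀ t ∈ Set.Icc (0:ℝ) ℓ₁, φ t = γ₁ t := fun t ht => if_pos ht.2
  have hagree₂ : ∀ t ∈ Set.Icc ℓ₁ (ℓ₁ + ℓ₂), φ t = γ₂ (t - ℓ₁) := by
    intro t ht
    by_cases h' : t ≤ ℓ₁
    · have : t = ℓ₁ := le_antisymm h' ht.1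
      subst this
      simp only [hφ, if_pos le_rfl, sub_self, h₂0, h₁e]
    · exact if_neg h'
  have hsplit : Set.Icc (0:ℝ) (ℓ₁ + ℓ₂) = Set.Icc 0 ℓ₁ ∪ Set.Icc ℓ₁ (ℓ₁ + ℓ₂) :=
    (Set.Icc_union_Icc_eq_Icc hℓ₁ (by linarith)).symm
  refine ⟨ℓ₁ + ℓ₂, by linarith, φ, ?_, ?_, ?_, ?_, ?_⟩
  · rw [hsplit]
    apply contOn_union_closed isClosed_Icc isClosed_Icc
    · exact hc₁.congr hagree₁
    · exact ((hc₂.comp (continuousOn_id.sub continuousOn_const) (by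
        intro t ht
        exact ⟨by simp [ht.1], by simpa using sub_le_iff_le_add'.mpr ht.2⟩)).congr hagree₂)
  · -- injectivity
    have key : ∀ u v, u ∈ Set.Icc (0:ℝ) (ℓ₁ + ℓ₂) → v ∈ Set.Icc (0:ℝ) (ℓ₁ + ℓ₂) →
        u ≤ ℓ₁ → ¬ v ≤ ℓ₁ → φ u = φ v → False := by
      intro u v hu hv h1 h2 huv
      rw [hagree₁ u ⟨hu.1, h1⟩, hagree₂ v ⟨le_of_not_ge h2, hv.2⟩] at huv
      have hvmem : v - ℓ₁ ∈ Set.Icc (0:ℝ) ℓ₂ := by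
        constructor
        · linarith [lt_of_not_ge h2]
        · linarith [hv.2]
      have hqA : γ₁ u ∈ A := hA' ▸ Set.mem_image_of_mem γ₁ ⟨hu.1, h1⟩
      have hqB : γ₁ u ∈ B := hB' ▸ huv ▸ Set.mem_image_of_mem γ₂ hvmem
      have hqp : γ₁ u = p := hAB _ hqA hqB
      have : v - ℓ₁ = 0 := hi₂ hvmem ⟨le_rfl, hℓ₂⟩ (by rw [← huv, hqp, h₂0])
      exact h2 (by linarith)
    intro u hu v hv huv
    by_cases h1 : u ≤ ℓ₁ <;> by_cases h2 : v ≤ ℓ₁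
    · exact hi₁ ⟨hu.1, h1⟩ ⟨hv.1, h2⟩
        (by rwa [hagree₁ u ⟨hu.1, h1⟩, hagree₁ v ⟨hv.1, h2⟩] at huv)
    · exact absurd huv (fun hh => key u v hu hv h1 h2 hh)
    · exact absurd huv.symm (fun hh => key v u hv hu h2 h1 hh)
    · have hum : u - ℓ₁ ∈ Set.Icc (0:ℝ) ℓ₂ := by
        constructor
        · linarith [lt_of_not_ge h1]
        · linarith [hu.2]
      have hvm : v - ℓ₁ ∈ Set.Icc (0:ℝ) ℓ₂ := by
        constructor
        · linarith [lt_of_not_ge h2]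
        · linarith [hv.2]
      have := hi₂ hum hvm
        (by rwa [hagree₂ u ⟨le_of_not_ge h1, hu.2⟩, hagree₂ v ⟨le_of_not_ge h2, hv.2⟩] at huv)
      linarith
  · rw [hagree₁ 0 ⟨le_rfl, hℓ₁⟩, h₁0]
  · by_cases h2 : ℓ₂ = 0
    · subst h2
      rw [hagree₁ (ℓ₁ + 0) ⟨by linarith, by linarith⟩, add_zero, h₁e, ← h₂0, ← h₂e]
    · have : ¬ (ℓ₁ + ℓ₂ ≤ ℓ₁) := by
        intro hh
        exact h2 (le_antisymm (by linarith) hℓ₂)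
      rw [hφ]
      simp only [if_neg this, add_sub_cancel_left, h₂e]
  · rw [hsplit, Set.image_union, hA', hB']
    congr 1
    · exact (Set.image_congr hagree₁).symm
    · rw [Set.image_congr hagree₂]
      have : (fun t => γ₂ (t - ℓ₁)) = γ₂ ∘ (fun t => t - ℓ₁) := rfl
      rw [this, Set.image_comp, Set.image_sub_const_Icc]
      simp

private lemma seg_geo (h : IsRTree M) (a b : M) :
    IsGeodesicSegmentFromTo (seg h a b) a b := (h a b).choose_spec.2.1

private lemma seg_unique (h : IsRTree M) {t : Set M} {a b : M} (ht : IsArcFromTo t a b) :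
    t = seg h a b := (h a b).choose_spec.2.2 t ht

private lemma seg_param (h : IsRTree M) (a b : M) :
    ∃ γ : ℝ → M, (∀ u ∈ Set.Icc (0:ℝ) (dist a b), ∀ v ∈ Set.Icc (0:ℝ) (dist a b),
      dist (γ u) (γ v) = |u - v|) ∧ γ 0 = a ∧ γ (dist a b) = b ∧
      seg h a b = γ '' Set.Icc 0 (dist a b) := by
  obtain ⟨ℓ, hℓ, γ, hiso, h0, he, him⟩ := seg_geo h a b
  have hld : ℓ = dist a b := by
    have := hiso 0 ⟨le_refl 0, hℓ⟩ ℓ ⟨hℓ, le_refl ℓ⟩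
    rw [h0, he, abs_of_nonpos (by linarith)] at this
    linarith
  exact hld ▸ ⟨γ, hiso, h0, he, him⟩

private lemma mem_seg_dist (h : IsRTree M) {a b p : M} (hp : p ∈ seg h a b) :
    dist a p + dist p b = dist a b := by
  obtain ⟨γ, hiso, h0, he, him⟩ := seg_param h a b
  rw [him] at hp
  obtain ⟨w, hw, rfl⟩ := hp
  have h1 := hiso 0 ⟨le_refl 0, dist_nonneg⟩ w hw
  have h2 := hiso w hw (dist a b) ⟨dist_nonneg, le_refl _⟩
  rw [h0] at h1
  rw [he] at h2
  rw [h1, h2, abs_of_nonpos (by linarith [hw.1]), abs_of_nonpos (by linarith [hw.2])]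
  ring

end Helpers

/-- If `ν` is the point of `[x₁,x₂]` at distance `s·d(x₁,x₂)` from
`x₁` and `(1−s)·d(x₁,x₂)` from `x₂`, then for all `y`,
`d(ν,y) = max (d(x₁,y) ∸ s·d(x₁,x₂)) (d(x₂,y) ∸ (1−s)·d(x₁,x₂))`
(the maximum of the two truncated subtractions). -/
theorem statement_4 {M : Type*} [MetricSpace M] (h : IsRTree M)
    (s : ℝ) (hs : s ∈ Set.Icc (0:ℝ) 1) (x₁ x₂ ν : M)
    (hν : ν ∈ seg h x₁ x₂)
    (hν₁ : dist x₁ ν = s * dist x₁ x₂)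
    (hν₂ : dist x₂ ν = (1 - s) * dist x₁ x₂) (y : M) :
    dist ν y =
      max (max (dist x₁ y - s * dist x₁ x₂) (dist x₂ y - (1 - s) * dist x₁ x₂)) 0 := by
  obtain ⟨γ, hγiso, hγ0, hγe, hγim⟩ := seg_param h x₁ x₂
  set d := dist x₁ x₂ with hdd
  have hd : 0 ≤ d := dist_nonneg
  -- ν = γ (s * d)
  have hνim : ν ∈ γ '' Set.Icc 0 d := hγim ▸ hν
  obtain ⟨u, hu, hν'⟩ := hνim
  have hud : u = s * d := by
    have h1 := hγiso 0 ⟨le_rfl, hd⟩ u hu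
    rw [hγ0, hν', abs_of_nonpos (by linarith [hu.1])] at h1
    rw [hν₁] at h1
    linarith
  -- parametrize seg ν y
  obtain ⟨δ, hδiso, hδ0, hδe, hδim⟩ := seg_param h ν y
  set L := dist ν y with hLL
  have hL : 0 ≤ L := dist_nonneg
  -- the set of times where δ is still in seg x₁ x₂
  have hScompact : IsCompact (seg h x₁ x₂) := by
    rw [hγim]
    exact isCompact_Icc.image_of_continuousOn (iso_contOn hγiso)
  set T : Set ℝ := Set.Icc 0 L ∩ δ ⁻¹' (seg h x₁ x₂) with hTT
  have hTclosed : IsClosed T :=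
    (iso_contOn hδiso).preimage_isClosed_of_isClosed isClosed_Icc hScompact.isClosed
  have hTcompact : IsCompact T := isCompact_Icc.of_isClosed_subset hTclosed inter_subset_left
  have hT0 : (0:ℝ) ∈ T := ⟨⟨le_rfl, hL⟩, by rw [Set.mem_preimage, hδ0]; exact hν⟩
  set t₀ := sSup T with ht₀def
  have ht₀T : t₀ ∈ T := hTcompact.sSup_mem ⟨0, hT0⟩
  have ht₀mem : t₀ ∈ Set.Icc (0:ℝ) L := ht₀T.1
  set p := δ t₀ with hpdef
  have hpS : p ∈ seg h x₁ x₂ := ht₀T.2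
  have hmax : ∀ t, t₀ ≤ t → t ≤ L → δ t ∈ seg h x₁ x₂ → t = t₀ := by
    intro t ht1 ht2 hts
    exact le_antisymm (le_csSup hTcompact.bddAbove ⟨⟨le_trans ht₀mem.1 ht1, ht2⟩, hts⟩) ht1
  -- p = γ w
  have hpim : p ∈ γ '' Set.Icc 0 d := hγim ▸ hpS
  obtain ⟨w, hw, hpw⟩ := hpim
  have hw1 : dist x₁ p = w := by
    have := hγiso 0 ⟨le_rfl, hd⟩ w hw
    rw [hγ0, hpw, abs_of_nonpos (by linarith [hw.1])] at this
    linarith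
  have hw2 : dist x₂ p = d - w := by
    have := hγiso w hw d ⟨hd, le_rfl⟩
    rw [hγe, hpw, abs_of_nonpos (by linarith [hw.2]), dist_comm] at this
    linarith
  have hνp : dist ν p = |s * d - w| := by
    have := hγiso u hu w hw
    rw [hν', hpw, hud] at this
    exact this
  have hνp' : dist ν p = t₀ := by
    have := hδiso 0 ⟨le_rfl, hL⟩ t₀ ht₀mem
    rw [hδ0, abs_of_nonpos (by linarith [ht₀mem.1])] at this
    linarith
  have hpy : dist p y = L - t₀ := by
    have := hδiso t₀ ht₀mem L ⟨hL, le_rfl⟩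
    rw [hδe, abs_of_nonpos (by linarith [ht₀mem.2])] at this
    linarith
  -- arc B from p to y
  have hBarc : IsArcFromTo ((fun t => δ (t + t₀)) '' Set.Icc 0 (L - t₀)) p y := by
    have hiso' : ∀ a ∈ Set.Icc (0:ℝ) (L - t₀), ∀ b ∈ Set.Icc (0:ℝ) (L - t₀),
        dist (δ (a + t₀)) (δ (b + t₀)) = |a - b| := by
      intro a ha b hb
      rw [hδiso (a + t₀) ⟨by linarith [ha.1, ht₀mem.1], by linarith [ha.2]⟩
        (b + t₀) ⟨by linarith [hb.1, ht₀mem.1], by linarith [hb.2]⟩]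
      congr 1
      ring
    have := isArcFromTo_of_iso (by linarith [ht₀mem.2]) hiso'
    simpa [hδe] using this
  have hBsub : ∀ q ∈ (fun t => δ (t + t₀)) '' Set.Icc 0 (L - t₀),
      q ∈ seg h x₁ x₂ → q = p := by
    rintro q ⟨t, ht, rfl⟩ hq
    have h2 := hmax (t + t₀) (by linarith [ht.1]) (by linarith [ht.2]) hq
    show δ (t + t₀) = p
    rw [h2]
  have hpB : p ∈ (fun t => δ (t + t₀)) '' Set.Icc 0 (L - t₀) :=
    ⟨0, ⟨le_rfl, by linarith [ht₀mem.2]⟩, by simp [hpdef]⟩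
  -- arc A₁ from x₁ to p
  have hA₁arc : IsArcFromTo (γ '' Set.Icc 0 w) x₁ p := by
    have hiso' : ∀ a ∈ Set.Icc (0:ℝ) w, ∀ b ∈ Set.Icc (0:ℝ) w,
        dist (γ a) (γ b) = |a - b| := fun a ha b hb =>
      hγiso a ⟨ha.1, ha.2.trans hw.2⟩ b ⟨hb.1, hb.2.trans hw.2⟩
    have := isArcFromTo_of_iso hw.1 hiso'
    rwa [hγ0, hpw] at this
  have hA₁sub : γ '' Set.Icc 0 w ⊆ seg h x₁ x₂ := by
    rw [hγim]
    exact Set.image_mono (Set.Icc_subset_Icc le_rfl hw.2)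
  -- arc A₂ from x₂ to p
  have hA₂arc : IsArcFromTo ((fun t => γ (d - t)) '' Set.Icc 0 (d - w)) x₂ p := by
    have hiso' : ∀ a ∈ Set.Icc (0:ℝ) (d - w), ∀ b ∈ Set.Icc (0:ℝ) (d - w),
        dist (γ (d - a)) (γ (d - b)) = |a - b| := by
      intro a ha b hb
      rw [hγiso (d - a) ⟨by linarith [ha.2, hw.1], by linarith [ha.1]⟩
        (d - b) ⟨by linarith [hb.2, hw.1], by linarith [hb.1]⟩, abs_sub_comm]
      congr 1
      ring
    have := isArcFromTo_of_iso (by linarith [hw.2]) hiso'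
    simpa [hγe, show d - (d - w) = w from by ring, hpw] using this
  have hA₂sub : (fun t => γ (d - t)) '' Set.Icc 0 (d - w) ⊆ seg h x₁ x₂ := by
    rintro q ⟨t, ht, rfl⟩
    rw [hγim]
    exact Set.mem_image_of_mem γ ⟨by linarith [ht.2, hw.1], by linarith [ht.1]⟩
  -- concatenations
  have hC₁ : IsArcFromTo (γ '' Set.Icc 0 w ∪ (fun t => δ (t + t₀)) '' Set.Icc 0 (L - t₀)) x₁ y :=
    arc_concat hA₁arc hBarc (fun q hqA hqB => hBsub q hqB (hA₁sub hqA))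
  have hC₂ : IsArcFromTo ((fun t => γ (d - t)) '' Set.Icc 0 (d - w) ∪
      (fun t => δ (t + t₀)) '' Set.Icc 0 (L - t₀)) x₂ y :=
    arc_concat hA₂arc hBarc (fun q hqA hqB => hBsub q hqB (hA₂sub hqA))
  have hp₁ : p ∈ seg h x₁ y := (seg_unique h hC₁) ▸ Set.mem_union_right _ hpB
  have hp₂ : p ∈ seg h x₂ y := (seg_unique h hC₂) ▸ Set.mem_union_right _ hpB
  have e1 : dist x₁ y = w + dist p y := by
    have := mem_seg_dist h hp₁
    rw [hw1] at this
    linarith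
  have e2 : dist x₂ y = (d - w) + dist p y := by
    have := mem_seg_dist h hp₂
    rw [hw2] at this
    linarith
  have e3 : dist ν y = |s * d - w| + dist p y := by
    rw [← hνp, hνp']
    rw [hLL] at hpy
    linarith
  have hr : 0 ≤ dist p y := dist_nonneg
  rw [hLL, e1, e2, e3]
  have hexp : (1 - s) * d = d - s * d := by ring
  rw [hexp]
  rcases le_total (s * d) w with hc | hc
  · have hinner : max (w + dist p y - s * d) (d - w + dist p y - (d - s * d))
        = w + dist p y - s * d := max_eq_left (by linarith)
    rw [hinner, abs_of_nonpos (by linarith), max_eq_left (by linarith)]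
    ring
  · have hinner : max (w + dist p y - s * d) (d - w + dist p y - (d - s * d))
        = d - w + dist p y - (d - s * d) := max_eq_right (by linarith)
    rw [hinner, abs_of_nonneg (by linarith), max_eq_left (by linarith)]
    ring
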